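/- Any strictly decreasing sequence of triangular sets A_1 ≻ A_2 ≻ … ≻ A_m in R_q has length m ≤ q^n. -/

import Mathlib

open MvPolynomial

/-- The class of a polynomial: the largest `c` such that `x_c` occurs in `P`,
with variables numbered `1,…,n` (variable `Fin`-index `i` has number `i+1`);
`cls P = 0` for constants. -/
noncomputable def cls {F : Type*} [CommSemiring F] {n : ℕ}
    (P : MvPolynomial (Fin n) F) : ℕ :=
  P.vars.sup fun i => (i : ℕ) + 1

/-- The leading degree of a polynomial: its degree in its leading variable
(`0` for constants). -/
noncomputable def ldeg {F : Type*} [CommSemiring F] {n : ℕ}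
    (P : MvPolynomial (Fin n) F) : ℕ :=
  P.vars.sup fun i => if (i : ℕ) + 1 = cls P then degreeOf i P else 0

section Aux
variable {F : Type*} [CommSemiring F] {n : ℕ}

lemma cls_le_n (P : MvPolynomial (Fin n) F) : cls P ≤ n := by
  unfold cls
  exact Finset.sup_le fun i _ => i.isLt

lemma cls_C (c : F) : cls (C c : MvPolynomial (Fin n) F) = 0 := by
  simp [cls, vars_C]

lemma ldeg_C (c : F) : ldeg (C c : MvPolynomial (Fin n) F) = 0 := by
  simp [ldeg, vars_C]

lemma ldeg_pos {P : MvPolynomial (Fin n) F} (h : 0 < cls P) : 0 < ldeg P := by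
  have hne : P.vars.Nonempty := by
    rcases P.vars.eq_empty_or_nonempty with he | hne
    · simp [cls, he] at h
    · exact hne
  obtain ⟨i, hi, hsup⟩ := Finset.exists_mem_eq_sup P.vars hne (fun i => (i : ℕ) + 1)
  have hdeg : 0 < degreeOf i P := by
    obtain ⟨d, hd, hid⟩ := (mem_vars i).mp hi
    have : d i ≤ degreeOf i P := by
      rw [degreeOf_eq_sup]; exact Finset.le_sup (f := fun m => m i) hd
    have : d i ≠ 0 := Finsupp.mem_support_iff.mp hid
    omega
  have hle : (if (i : ℕ) + 1 = cls P then degreeOf i P else 0) ≤ ldeg P := by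
    unfold ldeg
    exact Finset.le_sup (f := fun i : Fin n => if (i : ℕ) + 1 = cls P then degreeOf i P else 0) hi
  have hsup' : (i : ℕ) + 1 = cls P := hsup.symm
  rw [if_pos hsup'] at hle
  omega

lemma ldeg_le {P : MvPolynomial (Fin n) F} {q : ℕ} (h : ∀ j, degreeOf j P ≤ q) :
    ldeg P ≤ q := by
  unfold ldeg
  refine Finset.sup_le fun i _ => ?_
  split
  · exact h i
  · exact Nat.zero_le _

end Aux

/-- `P ≺ Q` : `P` has lower ordering than `Q`. -/
def polyLT {F : Type*} [CommSemiring F] {n : ℕ}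
    (P Q : MvPolynomial (Fin n) F) : Prop :=
  cls P < cls Q ∨ (cls P = cls Q ∧ ldeg P < ldeg Q)

/-- `P ∼ Q` : neither `P ≺ Q` nor `Q ≺ P`. -/
def polySim {F : Type*} [CommSemiring F] {n : ℕ}
    (P Q : MvPolynomial (Fin n) F) : Prop :=
  ¬ polyLT P Q ∧ ¬ polyLT Q P

section Aux2
variable {F : Type*} [CommSemiring F] {n : ℕ}

lemma polySim_iff {P Q : MvPolynomial (Fin n) F} :
    polySim P Q ↔ cls P = cls Q ∧ ldeg P = ldeg Q := by
  unfold polySim polyLT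
  omega

noncomputable def clv (q : ℕ) (A : List (MvPolynomial (Fin n) F)) (c : ℕ) : ℕ :=
  A.foldr (fun P acc => if cls P = c then ldeg P - 1 else acc) (q - 1)

lemma clv_cons {q c : ℕ} {P : MvPolynomial (Fin n) F} {A : List (MvPolynomial (Fin n) F)} :
    clv q (P :: A) c = if cls P = c then ldeg P - 1 else clv q A c := rfl

lemma clv_of_forall_ne {q c : ℕ} {A : List (MvPolynomial (Fin n) F)}
    (h : ∀ P ∈ A, cls P ≠ c) : clv q A c = q - 1 := by
  induction A with
  | nil => rfl
  | cons a t ih =>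
    rw [clv_cons, if_neg (h a (List.mem_cons_self)),
      ih fun P hP => h P (List.mem_cons_of_mem _ hP)]

lemma clv_of_mem {q c : ℕ} {A : List (MvPolynomial (Fin n) F)}
    (hpw : A.Pairwise fun P Q => cls P < cls Q)
    {P : MvPolynomial (Fin n) F} (hP : P ∈ A) (hc : cls P = c) :
    clv q A c = ldeg P - 1 := by
  induction A with
  | nil => cases hP
  | cons a t ih =>
    rcases List.mem_cons.mp hP with rfl | hPt
    · rw [clv_cons, if_pos hc]
    · have h1 : cls a < cls P := (List.pairwise_cons.mp hpw).1 P hPt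
      rw [clv_cons, if_neg (by omega), ih (List.pairwise_cons.mp hpw).2 hPt]

lemma clv_le {q c : ℕ} {A : List (MvPolynomial (Fin n) F)}
    (h : ∀ P ∈ A, ldeg P ≤ q - 1) : clv q A c ≤ q - 1 := by
  induction A with
  | nil => exact le_rfl
  | cons a t ih =>
    rw [clv_cons]
    split
    · have := h a (List.mem_cons_self)
      omega
    · exact ih fun P hP => h P (List.mem_cons_of_mem _ hP)

end Aux2

/-- A triangular set: either a single nonzero constant (trivial triangular set), or a
nonempty sequence of nonzero polynomials of positive, strictly increasing classes. -/
def IsTriSet {F : Type*} [CommSemiring F] {n : ℕ}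
    (A : List (MvPolynomial (Fin n) F)) : Prop :=
  (∃ c : F, c ≠ 0 ∧ A = [C c]) ∨
    (A ≠ [] ∧ (∀ P ∈ A, P ≠ 0) ∧ (∀ P ∈ A, 0 < cls P) ∧
      A.Chain' fun P Q => cls P < cls Q)

/-- `A ≺ B` for triangular sets: either there is `k` with `A_i ∼ B_i` for `i < k` and
`A_k ≺ B_k`, or `A` is longer than `B` and `A_i ∼ B_i` for all valid indices of `B`. -/
def triLT {F : Type*} [CommSemiring F] {n : ℕ}
    (A B : List (MvPolynomial (Fin n) F)) : Prop :=
  (∃ k, k < A.length ∧ k < B.length ∧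
      (∀ i, i < k → polySim (A.getD i 0) (B.getD i 0)) ∧
      polyLT (A.getD k 0) (B.getD k 0)) ∨
    (B.length < A.length ∧ ∀ i, i < B.length → polySim (A.getD i 0) (B.getD i 0))

lemma geom_aux {q : ℕ} (hq : 1 ≤ q) : ∀ t, ∑ j ∈ Finset.range t, (q - 1) * q ^ j = q ^ t - 1 := by
  intro t
  induction t with
  | zero => simp
  | succ t ih =>
    have h1 : 1 ≤ q ^ t := Nat.one_le_pow _ _ (by omega)
    have h2 : (q - 1) * q ^ t = q * q ^ t - q ^ t := by rw [Nat.sub_mul, one_mul]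
    have h3 : q ^ (t + 1) = q * q ^ t := by ring
    have h4 : q ^ t ≤ q * q ^ t := Nat.le_mul_of_pos_left _ (by omega)
    have key : ∀ a b : ℕ, 1 ≤ a → a ≤ b → (a - 1) + (b - a) = b - 1 := by
      intro a b ha hab; omega
    rw [Finset.sum_range_succ, ih, h2, h3]
    exact key (q ^ t) (q * q ^ t) h1 h4

lemma lex_sum_lt {q t j₀ : ℕ} (hq : 1 ≤ q) (hj : j₀ < t) {f g : ℕ → ℕ}
    (hf : ∀ j, j < t → f j ≤ q - 1)
    (hagree : ∀ j, j₀ < j → j < t → f j = g j) (hlt : f j₀ < g j₀) :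
    ∑ j ∈ Finset.range t, f j * q ^ j < ∑ j ∈ Finset.range t, g j * q ^ j := by
  have hsplit : ∀ h : ℕ → ℕ, ∑ j ∈ Finset.range t, h j * q ^ j
      = ((∑ j ∈ Finset.range j₀, h j * q ^ j) + h j₀ * q ^ j₀)
        + ∑ j ∈ Finset.Ico (j₀ + 1) t, h j * q ^ j := by
    intro h
    rw [← Finset.sum_range_succ (fun j => h j * q ^ j) j₀]
    rw [Finset.sum_range_add_sum_Ico _ (by omega : j₀ + 1 ≤ t)]
  rw [hsplit f, hsplit g]
  have htail : ∑ j ∈ Finset.Ico (j₀ + 1) t, f j * q ^ j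
      = ∑ j ∈ Finset.Ico (j₀ + 1) t, g j * q ^ j := by
    refine Finset.sum_congr rfl fun j hj' => ?_
    have := Finset.mem_Ico.mp hj'
    rw [hagree j (by omega) this.2]
  have hhead : ∑ j ∈ Finset.range j₀, f j * q ^ j ≤ q ^ j₀ - 1 := by
    rw [← geom_aux hq j₀]
    exact Finset.sum_le_sum fun j hj' =>
      Nat.mul_le_mul_right _ (hf j (by have := Finset.mem_range.mp hj'; omega))
  have hmid : f j₀ * q ^ j₀ + q ^ j₀ ≤ g j₀ * q ^ j₀ := by
    have h1 : (f j₀ + 1) * q ^ j₀ ≤ g j₀ * q ^ j₀ := Nat.mul_le_mul_right _ (by omega)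
    have h2 : (f j₀ + 1) * q ^ j₀ = f j₀ * q ^ j₀ + q ^ j₀ := by ring
    omega
  have hpow : 1 ≤ q ^ j₀ := Nat.one_le_pow _ _ (by omega)
  have hgnn : (0:ℕ) ≤ ∑ j ∈ Finset.range j₀, g j * q ^ j := Nat.zero_le _
  rw [htail]
  have := Nat.zero_le (∑ j ∈ Finset.range j₀, g j * q ^ j)
  omega

lemma sum_bound {q t : ℕ} (hq : 1 ≤ q) {f : ℕ → ℕ} (hf : ∀ j, j < t → f j ≤ q - 1)
    {j₀ : ℕ} (hj₀ : j₀ < t) (hlt : f j₀ < q - 1) :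
    ∑ j ∈ Finset.range t, f j * q ^ j < q ^ t - 1 := by
  rw [← geom_aux hq t]
  refine Finset.sum_lt_sum (fun j hj => Nat.mul_le_mul_right _ (hf j (Finset.mem_range.mp hj)))
    ⟨j₀, Finset.mem_range.mpr hj₀, ?_⟩
  have hp : 0 < q ^ j₀ := Nat.pow_pos (by omega)
  exact Nat.mul_lt_mul_of_lt_of_le hlt le_rfl hp

section Main
variable {F : Type*} [CommSemiring F] {n : ℕ}

lemma tri_cases {A : List (MvPolynomial (Fin n) F)} (hA : IsTriSet A) :
    (∃ c : F, c ≠ 0 ∧ A = [C c]) ∨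
      (A ≠ [] ∧ (∀ P ∈ A, 0 < cls P) ∧ A.Pairwise fun P Q => cls P < cls Q) := by
  rcases hA with h | ⟨h1, _, h3, h4⟩
  · exact Or.inl h
  · refine Or.inr ⟨h1, h3, ?_⟩
    have : IsTrans (MvPolynomial (Fin n) F) fun P Q => cls P < cls Q :=
      ⟨fun _ _ _ h h' => lt_trans h h'⟩
    exact List.isChain_iff_pairwise.mp h4

lemma getD_mem {A : List (MvPolynomial (Fin n) F)} {i : ℕ} (hi : i < A.length) :
    A.getD i 0 ∈ A := by
  rw [List.getD_eq_getElem _ _ hi]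
  exact List.getElem_mem _

lemma mem_getD {A : List (MvPolynomial (Fin n) F)} {P : MvPolynomial (Fin n) F} (hP : P ∈ A) :
    ∃ i, i < A.length ∧ A.getD i 0 = P := by
  obtain ⟨i, hi, h⟩ := List.mem_iff_getElem.mp hP
  exact ⟨i, hi, by rw [List.getD_eq_getElem _ _ hi, h]⟩

lemma cls_strict {A : List (MvPolynomial (Fin n) F)}
    (hpw : A.Pairwise fun P Q => cls P < cls Q) {i j : ℕ}
    (hij : i < j) (hj : j < A.length) :
    cls (A.getD i 0) < cls (A.getD j 0) := by
  have hi : i < A.length := lt_trans hij hj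
  rw [List.getD_eq_getElem _ _ hi, List.getD_eq_getElem _ _ hj]
  exact List.pairwise_iff_getElem.mp hpw i j hi hj hij

lemma cls_mono {A : List (MvPolynomial (Fin n) F)}
    (hpw : A.Pairwise fun P Q => cls P < cls Q) {i j : ℕ}
    (hij : i ≤ j) (hj : j < A.length) :
    cls (A.getD i 0) ≤ cls (A.getD j 0) := by
  rcases Nat.lt_or_ge i j with h | h
  · exact le_of_lt (cls_strict hpw h hj)
  · have : i = j := le_antisymm hij h
    rw [this]

open scoped Classical in
noncomputable def meas (q : ℕ) (A : List (MvPolynomial (Fin n) F)) : ℕ :=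
  if ∀ P ∈ A, 0 < cls P then 1 + ∑ j ∈ Finset.range n, clv q A (n - j) * q ^ j else 0

lemma meas_trivial {q : ℕ} (c : F) : meas q [(C c : MvPolynomial (Fin n) F)] = 0 := by
  rw [meas, if_neg]
  intro h
  have := h (C c) (List.mem_singleton_self _)
  rw [cls_C] at this
  omega

lemma meas_nontrivial {q : ℕ} {A : List (MvPolynomial (Fin n) F)}
    (h : ∀ P ∈ A, 0 < cls P) :
    meas q A = 1 + ∑ j ∈ Finset.range n, clv q A (n - j) * q ^ j := by
  rw [meas, if_pos h]

end Main

section Main2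
variable {F : Type*} [CommSemiring F] {n : ℕ}

lemma clv_agree {q : ℕ} {A B : List (MvPolynomial (Fin n) F)}
    (hApw : A.Pairwise fun P Q => cls P < cls Q)
    (hBpw : B.Pairwise fun P Q => cls P < cls Q)
    {k cstar : ℕ} (hkA : k ≤ A.length) (hkB : k ≤ B.length)
    (hsim : ∀ i, i < k →
      cls (A.getD i 0) = cls (B.getD i 0) ∧ ldeg (A.getD i 0) = ldeg (B.getD i 0))
    (hPA : ∀ i, k ≤ i → i < A.length → cstar ≤ cls (A.getD i 0))
    (hPB : ∀ i, k ≤ i → i < B.length → cstar ≤ cls (B.getD i 0))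
    {c : ℕ} (hc : c < cstar) : clv q A c = clv q B c := by
  by_cases hexA : ∃ P ∈ A, cls P = c
  · obtain ⟨P, hP, hPc⟩ := hexA
    obtain ⟨i, hi, rfl⟩ := mem_getD hP
    have hik : i < k := by
      by_contra h
      push_neg at h
      have := hPA i h hi
      omega
    have hBi : i < B.length := lt_of_lt_of_le hik hkB
    have hs := hsim i hik
    rw [clv_of_mem hApw hP hPc,
      clv_of_mem hBpw (getD_mem hBi) (by rw [← hs.1]; exact hPc), hs.2]
  · by_cases hexB : ∃ P ∈ B, cls P = c
    · exfalso
      obtain ⟨P, hP, hPc⟩ := hexB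
      obtain ⟨i, hi, rfl⟩ := mem_getD hP
      have hik : i < k := by
        by_contra h
        push_neg at h
        have := hPB i h hi
        omega
      have hAi : i < A.length := lt_of_lt_of_le hik hkA
      have hs := hsim i hik
      exact hexA ⟨A.getD i 0, getD_mem hAi, by omega⟩
    · push_neg at hexA hexB
      rw [clv_of_forall_ne hexA, clv_of_forall_ne hexB]

lemma meas_lt {q : ℕ} (hq : 2 ≤ q) {A B : List (MvPolynomial (Fin n) F)}
    (hcA : ∀ P ∈ A, ∀ j : Fin n, degreeOf j P ≤ q - 1)
    (hcB : ∀ P ∈ B, ∀ j : Fin n, degreeOf j P ≤ q - 1)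
    (hA : IsTriSet A) (hB : IsTriSet B) (hlt : triLT A B) :
    meas q A < meas q B := by
  rcases tri_cases hB with ⟨c, hc0, rfl⟩ | ⟨hBne, hBpos, hBpw⟩
  · exfalso
    rcases hlt with ⟨k, hkA, hkB, hsim, hplt⟩ | ⟨hlen, hsim⟩
    · have hk0 : k = 0 := by simpa using hkB
      subst hk0
      have hB0 : ([(C c : MvPolynomial (Fin n) F)].getD 0 0) = C c := rfl
      rw [hB0] at hplt
      unfold polyLT at hplt
      rw [cls_C, ldeg_C] at hplt
      omega
    · simp only [List.length_singleton] at hlen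
      have hs := (polySim_iff.mp (hsim 0 (by simp))).1
      have hB0 : ([(C c : MvPolynomial (Fin n) F)].getD 0 0) = C c := rfl
      rw [hB0, cls_C] at hs
      rcases tri_cases hA with ⟨c', _, rfl⟩ | ⟨hAne, hApos, _⟩
      · simp at hlen
      · have hmem : A.getD 0 0 ∈ A := getD_mem (by omega)
        have := hApos _ hmem
        omega
  · rcases tri_cases hA with ⟨c, hc0, rfl⟩ | ⟨hAne, hApos, hApw⟩
    · rw [meas_trivial, meas_nontrivial hBpos]
      omega
    · rw [meas_nontrivial hApos, meas_nontrivial hBpos]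
      have hldA : ∀ P ∈ A, ldeg P ≤ q - 1 := fun P hP => ldeg_le (hcA P hP)
      have hldB : ∀ P ∈ B, ldeg P ≤ q - 1 := fun P hP => ldeg_le (hcB P hP)
      have pack : ∃ k cstar,
          k ≤ A.length ∧ k ≤ B.length ∧
          (∀ i, i < k →
            cls (A.getD i 0) = cls (B.getD i 0) ∧ ldeg (A.getD i 0) = ldeg (B.getD i 0)) ∧
          (∀ i, k ≤ i → i < A.length → cstar ≤ cls (A.getD i 0)) ∧
          (∀ i, k ≤ i → i < B.length → cstar ≤ cls (B.getD i 0)) ∧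
          clv q A cstar < clv q B cstar ∧ 1 ≤ cstar ∧ cstar ≤ n := by
        rcases hlt with ⟨k, hkA', hkB', hsim', hplt⟩ | ⟨hlen, hsim'⟩
        · have hsimE : ∀ i, i < k →
              cls (A.getD i 0) = cls (B.getD i 0) ∧ ldeg (A.getD i 0) = ldeg (B.getD i 0) :=
            fun i hi => polySim_iff.mp (hsim' i hi)
          have hAk : A.getD k 0 ∈ A := getD_mem hkA'
          have hBk : B.getD k 0 ∈ B := getD_mem hkB'
          rcases hplt with hcls | ⟨hceq, hldeg⟩
          · refine ⟨k, cls (A.getD k 0), le_of_lt hkA', le_of_lt hkB', hsimE,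
              fun i hki hi => cls_mono hApw hki hi,
              fun i hki hi => by have := cls_mono hBpw hki hi; omega, ?_,
              hApos _ hAk, cls_le_n _⟩
            have e1 : clv q A (cls (A.getD k 0)) = ldeg (A.getD k 0) - 1 :=
              clv_of_mem hApw hAk rfl
            have e2 : clv q B (cls (A.getD k 0)) = q - 1 := by
              apply clv_of_forall_ne
              intro P hP
              obtain ⟨i, hi, rfl⟩ := mem_getD hP
              rcases Nat.lt_or_ge i k with h | h
              · have h1 := (hsimE i h).1
                have h2 := cls_strict hApw h hkA'
                omega
              · have := cls_mono hBpw h hi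
                omega
            rw [e1, e2]
            have := hldA _ hAk
            omega
          · refine ⟨k, cls (A.getD k 0), le_of_lt hkA', le_of_lt hkB', hsimE,
              fun i hki hi => cls_mono hApw hki hi,
              fun i hki hi => by have := cls_mono hBpw hki hi; omega, ?_,
              hApos _ hAk, cls_le_n _⟩
            have e1 : clv q A (cls (A.getD k 0)) = ldeg (A.getD k 0) - 1 :=
              clv_of_mem hApw hAk rfl
            have e2 : clv q B (cls (A.getD k 0)) = ldeg (B.getD k 0) - 1 :=
              clv_of_mem hBpw hBk hceq.symm
            have h3 := ldeg_pos (hApos _ hAk)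
            rw [e1, e2]
            omega
        · have hAk : A.getD B.length 0 ∈ A := getD_mem hlen
          refine ⟨B.length, cls (A.getD B.length 0), le_of_lt hlen, le_rfl,
            fun i hi => polySim_iff.mp (hsim' i hi),
            fun i hki hi => cls_mono hApw hki hi,
            fun i hki hi => by omega, ?_, hApos _ hAk, cls_le_n _⟩
          have e1 : clv q A (cls (A.getD B.length 0)) = ldeg (A.getD B.length 0) - 1 :=
            clv_of_mem hApw hAk rfl
          have e2 : clv q B (cls (A.getD B.length 0)) = q - 1 := by
            apply clv_of_forall_ne
            intro P hP
            obtain ⟨i, hi, rfl⟩ := mem_getD hP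
            have h1 := (polySim_iff.mp (hsim' i hi)).1
            have h2 := cls_strict hApw hi hlen
            omega
          rw [e1, e2]
          have := hldA _ hAk
          omega
      obtain ⟨k, cstar, hkA, hkB, hsim, hPA, hPB, hclv, hc1, hcn⟩ := pack
      have key : ∑ j ∈ Finset.range n, clv q A (n - j) * q ^ j
          < ∑ j ∈ Finset.range n, clv q B (n - j) * q ^ j := by
        apply lex_sum_lt (j₀ := n - cstar) (by omega) (by omega)
        · intro j _
          exact clv_le hldA
        · intro j h1 h2
          exact clv_agree hApw hBpw hkA hkB hsim hPA hPB (by omega)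
        · have h : n - (n - cstar) = cstar := by omega
          rw [h]
          exact hclv
      omega

lemma meas_le {q : ℕ} (hq : 2 ≤ q) {A : List (MvPolynomial (Fin n) F)}
    (hcA : ∀ P ∈ A, ∀ j : Fin n, degreeOf j P ≤ q - 1)
    (hA : IsTriSet A) : meas q A ≤ q ^ n - 1 := by
  rcases tri_cases hA with ⟨c, _, rfl⟩ | ⟨hAne, hApos, hApw⟩
  · rw [meas_trivial]
    exact Nat.zero_le _
  · rw [meas_nontrivial hApos]
    have hlen : 0 < A.length := List.length_pos_iff.mpr hAne
    have hA0 : A.getD 0 0 ∈ A := getD_mem hlen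
    have hc1 : 1 ≤ cls (A.getD 0 0) := hApos _ hA0
    have hcn : cls (A.getD 0 0) ≤ n := cls_le_n _
    have hbd : ∑ j ∈ Finset.range n, clv q A (n - j) * q ^ j < q ^ n - 1 := by
      apply sum_bound (by omega) (fun j _ => clv_le fun P hP => ldeg_le (hcA P hP))
        (j₀ := n - cls (A.getD 0 0)) (by omega)
      have h : n - (n - cls (A.getD 0 0)) = cls (A.getD 0 0) := by omega
      rw [h, clv_of_mem hApw hA0 rfl]
      have h1 := ldeg_le (hcA _ hA0)
      omega
    have hpow : 1 ≤ q ^ n := Nat.one_le_pow _ _ (by omega)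
    omega

end Main2

/-- Any strictly decreasing sequence of triangular sets
`A_1 ≻ A_2 ≻ … ≻ A_m` in `R_q` (polynomials in canonical form: degree at most `q−1` in
each variable) has length `m ≤ q^n`. -/
theorem stmt_11 {F : Type*} [Field F] [Fintype F] {n m : ℕ}
    (A : Fin m → List (MvPolynomial (Fin n) F))
    (hcanon : ∀ i : Fin m, ∀ P ∈ A i, ∀ j : Fin n, degreeOf j P ≤ Fintype.card F - 1)
    (hT : ∀ i : Fin m, IsTriSet (A i))
    (hdec : ∀ (i : Fin m) (h : (i : ℕ) + 1 < m), triLT (A ⟨(i : ℕ) + 1, h⟩) (A i)) :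
    m ≤ Fintype.card F ^ n := by
  rcases Nat.eq_zero_or_pos m with rfl | hm
  · exact Nat.zero_le _
  set q := Fintype.card F with hqdef
  have hq : 2 ≤ q := Fintype.one_lt_card
  have hpow : 1 ≤ q ^ n := Nat.one_le_pow _ _ (by omega)
  have key : ∀ j (hj : j + 1 < m),
      meas q (A ⟨j + 1, hj⟩) < meas q (A ⟨j, Nat.lt_of_succ_lt hj⟩) := by
    intro j hj
    exact meas_lt hq (hcanon _) (hcanon _) (hT _) (hT _)
      (hdec ⟨j, Nat.lt_of_succ_lt hj⟩ hj)
  have bound : ∀ i : Fin m, meas q (A i) ≤ q ^ n - 1 :=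
    fun i => meas_le hq (hcanon i) (hT i)
  have chain : ∀ j (hj : j < m), meas q (A ⟨j, hj⟩) + j ≤ q ^ n - 1 := by
    intro j
    induction j with
    | zero => intro hj; simpa using bound ⟨0, hj⟩
    | succ j ih =>
      intro hj
      have h1 := ih (Nat.lt_of_succ_lt hj)
      have h2 := key j hj
      omega
  have := chain (m - 1) (by omega)
  omega
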